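/- Consider the alternating sequences for the equation X + A^H f(X)^{-1} A = Q, assume they are well defined (all matrices f(Q) − B_h^(k) and Q − B^(k) are invertible), and let X_M be a Hermitian positive definite solution of X + A^H f(X)^{-1} A = Q such that X_M − B^(k) and f(X_M) − B_h^(k) are invertible for all k ≥ 1. Define T_k = (X_M − B^(k))^{-1} A^(k) and T_h^(k) = (f(X_M) − B_h^(k))^{-1} A_h^(k). Then for all integers i, j, k ≥ 1: T_{i+j−1} = f(T_h^(i)) T_h^(j), T_h^(i+j) = T_h^(i) T_j, and consequently T_h^(i+j+k−1) = T_h^(k) f(T_h^(i)) T_h^(j); in particular T_h^(k) = T_h^(1) T_1^{k−1} for every k ≥ 1. -/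

import Mathlib

open Matrix Filter Topology
open scoped ComplexOrder

noncomputable section

/-- Square complex matrices of size `n`. -/
abbrev Mat (n : ℕ) := Matrix (Fin n) (Fin n) ℂ

/-- An operator `f` on complex `n × n` matrices is *admissible* if it satisfies
(a1) `f (f X) = X`, (a2) additivity, (a3) multiplicativity, and
(a4) `f X` is positive semidefinite whenever `X` is. -/
def Admissible {n : ℕ} (f : Mat n → Mat n) : Prop :=
  (∀ X, f (f X) = X) ∧
  (∀ X Y, f (X + Y) = f X + f Y) ∧
  (∀ X Y, f (X * Y) = f X * f Y) ∧
  (∀ X, X.PosSemidef → (f X).PosSemidef)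

/-- One step of the alternating iteration producing `(A⁽ᵏ⁾, B⁽ᵏ⁾, Q⁽ᵏ⁾)` from
`(A_h⁽ᵏ⁾, B_h⁽ᵏ⁾, Q_h⁽ᵏ⁾)` (plus-sign equation). -/
def altStepS {n : ℕ} (f : Mat n → Mat n) (A Q : Mat n) (h : Mat n × Mat n × Mat n) :
    Mat n × Mat n × Mat n :=
  (f A * (f Q - h.2.1)⁻¹ * h.1,
   f A * (f Q - h.2.1)⁻¹ * (f A)ᴴ,
   h.2.2 - h.1ᴴ * (f Q - h.2.1)⁻¹ * h.1)

/-- One step of the alternating iteration producing `(A_h⁽ᵏ⁺¹⁾, B_h⁽ᵏ⁺¹⁾, Q_h⁽ᵏ⁺¹⁾)`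
from `(A⁽ᵏ⁾, B⁽ᵏ⁾, Q⁽ᵏ⁾)` (plus-sign equation). -/
def altStepH {n : ℕ} (A Q : Mat n) (s : Mat n × Mat n × Mat n) : Mat n × Mat n × Mat n :=
  (A * (Q - s.2.1)⁻¹ * s.1,
   A * (Q - s.2.1)⁻¹ * Aᴴ,
   s.2.2 - s.1ᴴ * (Q - s.2.1)⁻¹ * s.1)

/-- The half-index alternating sequence: `altH f A Q k` is the paper's
`(A_{1/2}^{(k+1)}, B_{1/2}^{(k+1)}, Q_{1/2}^{(k+1)})`, starting from `(A, 0, Q)`. -/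
def altH {n : ℕ} (f : Mat n → Mat n) (A Q : Mat n) : ℕ → Mat n × Mat n × Mat n
  | 0 => (A, 0, Q)
  | k + 1 => altStepH A Q (altStepS f A Q (altH f A Q k))

/-- The whole-index alternating sequence: `altS f A Q k` is the paper's
`(A^{(k+1)}, B^{(k+1)}, Q^{(k+1)})` of the alternating iteration. -/
def altS {n : ℕ} (f : Mat n → Mat n) (A Q : Mat n) (k : ℕ) : Mat n × Mat n × Mat n :=
  altStepS f A Q (altH f A Q k)

/-! ### Auxiliary lemmas -/

namespace Stmt19Aux

variable {n : ℕ} {f : Mat n → Mat n}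

lemma f_zero (hf : Admissible f) : f 0 = 0 := by
  have h := hf.2.1 0 0
  rw [add_zero] at h
  exact (left_eq_add.mp h)

lemma f_one (hf : Admissible f) : f 1 = 1 := by
  have h1 : f (f 1 * 1) = 1 * f 1 := by rw [hf.2.2.1, hf.1]
  rw [mul_one, hf.1, one_mul] at h1
  exact h1.symm

lemma f_neg (hf : Admissible f) (X : Mat n) : f (-X) = -f X := by
  have h := hf.2.1 X (-X)
  rw [add_neg_cancel, f_zero hf] at h
  exact (neg_eq_of_add_eq_zero_right h.symm).symm

lemma f_sub (hf : Admissible f) (X Y : Mat n) : f (X - Y) = f X - f Y := by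
  rw [sub_eq_add_neg, hf.2.1, f_neg hf, sub_eq_add_neg]

lemma f_pow (hf : Admissible f) (X : Mat n) : ∀ k : ℕ, f (X ^ k) = f X ^ k
  | 0 => by rw [pow_zero, pow_zero, f_one hf]
  | k + 1 => by rw [pow_succ, pow_succ, hf.2.2.1, f_pow hf X k]

lemma f_isUnit (hf : Admissible f) {X : Mat n} (h : IsUnit X) : IsUnit (f X) := by
  rcases h with ⟨u, rfl⟩
  exact isUnit_iff_exists.mpr ⟨f ↑u⁻¹,
    by rw [← hf.2.2.1, u.mul_inv, f_one hf],
    by rw [← hf.2.2.1, u.inv_mul, f_one hf]⟩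

lemma f_inv (hf : Admissible f) {X : Mat n} (h : IsUnit X) : f X⁻¹ = (f X)⁻¹ := by
  have hd := (Matrix.isUnit_iff_isUnit_det _).mp h
  have h1 : f X * f X⁻¹ = 1 := by rw [← hf.2.2.1, Matrix.mul_nonsing_inv _ hd, f_one hf]
  exact (Matrix.inv_eq_right_inv h1).symm

lemma exists_posSemidef_sub {X : Mat n} (hX : X.IsHermitian) :
    ∃ P N : Mat n, P.PosSemidef ∧ N.PosSemidef ∧ X = P - N := by
  classical
  refine ⟨(hX.eigenvectorUnitary : Mat n) *
            Matrix.diagonal (fun i => (RCLike.ofReal (max (hX.eigenvalues i) 0) : ℂ)) *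
            (hX.eigenvectorUnitary : Mat n)ᴴ,
          (hX.eigenvectorUnitary : Mat n) *
            Matrix.diagonal (fun i => (RCLike.ofReal (max (-(hX.eigenvalues i)) 0) : ℂ)) *
            (hX.eigenvectorUnitary : Mat n)ᴴ,
          ?_, ?_, ?_⟩
  · exact (Matrix.posSemidef_diagonal_iff.mpr fun i =>
      RCLike.ofReal_nonneg.mpr (le_max_right _ _)).mul_mul_conjTranspose_same _
  · exact (Matrix.posSemidef_diagonal_iff.mpr fun i =>
      RCLike.ofReal_nonneg.mpr (le_max_right _ _)).mul_mul_conjTranspose_same _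
  · rw [← sub_mul, ← Matrix.mul_sub, Matrix.diagonal_sub]
    have h := hX.spectral_theorem
    conv_lhs => rw [h]
    congr 1
    congr 1
    have hfun : (RCLike.ofReal ∘ hX.eigenvalues : Fin n → ℂ)
        = fun i => (RCLike.ofReal (max (hX.eigenvalues i) 0) : ℂ)
          - RCLike.ofReal (max (-(hX.eigenvalues i)) 0) := by
      funext i
      rw [Function.comp_apply, ← RCLike.ofReal_sub, max_zero_sub_max_neg_zero_eq_self]
    rw [hfun]; rfl

lemma f_herm (hf : Admissible f) {X : Mat n} (hX : X.IsHermitian) : (f X).IsHermitian := by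
  obtain ⟨P, N, hP, hN, rfl⟩ := exists_posSemidef_sub hX
  rw [f_sub hf]
  exact ((hf.2.2.2 P hP).isHermitian).sub ((hf.2.2.2 N hN).isHermitian)

lemma f_conjT (hf : Admissible f) (X : Mat n) : f Xᴴ = (f X)ᴴ := by
  rcases Nat.eq_zero_or_pos n with hn | hn
  · subst hn; exact Subsingleton.elim _ _
  haveI : Nonempty (Fin n) := ⟨⟨0, hn⟩⟩
  set J : Mat n := Complex.I • 1 with hJ
  have hJc : ∀ M : Mat n, J * M = M * J := fun M => by
    rw [hJ, smul_mul_assoc, mul_smul_comm, one_mul, mul_one]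
  have hfJc : ∀ M : Mat n, f J * M = M * f J := by
    intro M
    conv_lhs => rw [← hf.1 M]
    conv_rhs => rw [← hf.1 M]
    rw [← hf.2.2.1, ← hf.2.2.1, hJc]
  obtain ⟨c, hc⟩ : f J ∈ Set.range (Matrix.scalar (Fin n)) := by
    apply Matrix.mem_range_scalar_of_commute_single
    intro i j _
    exact (hfJc _).symm
  have hJJ : J * J = -1 := by
    rw [hJ, smul_mul_assoc, mul_smul_comm, one_mul, smul_smul, Complex.I_mul_I, neg_smul, one_smul]
  have hcc : c * c = -1 := by
    have h1 : f J * f J = -1 := by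
      rw [← hf.2.2.1, hJJ, f_neg hf, f_one hf]
    rw [← hc] at h1
    have h2 : Matrix.scalar (Fin n) (c * c) = Matrix.scalar (Fin n) (-1) := by
      rw [_root_.map_mul, h1, _root_.map_neg, _root_.map_one]
    exact Matrix.scalar_inj.mp h2
  have hcs : star c = -c := by
    have hfac : (c - Complex.I) * (c + Complex.I) = 0 := by
      have h3 : (c - Complex.I) * (c + Complex.I) = c * c - Complex.I * Complex.I := by ring
      rw [h3, Complex.I_mul_I, hcc, sub_neg_eq_add, neg_add_cancel]
    rcases mul_eq_zero.mp hfac with h | h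
    · rw [sub_eq_zero.mp h]; simp [Complex.conj_I]
    · rw [eq_neg_of_add_eq_zero_left h]; simp [Complex.conj_I]
  have hJH : Jᴴ = -J := by
    rw [hJ, Matrix.conjTranspose_smul, Matrix.conjTranspose_one]
    simp [Complex.conj_I]
  set H : Mat n := X + Xᴴ with hH
  set K : Mat n := J * (Xᴴ - X) with hK
  have hHh : H.IsHermitian := by
    rw [Matrix.IsHermitian, hH, Matrix.conjTranspose_add, Matrix.conjTranspose_conjTranspose,
      add_comm]
  have hKh : K.IsHermitian := by
    rw [Matrix.IsHermitian, hK, Matrix.conjTranspose_mul, hJH, Matrix.conjTranspose_sub,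
      Matrix.conjTranspose_conjTranspose, mul_neg, ← hJc, mul_sub, mul_sub, neg_sub]
  have h2X : X + X = H + J * K := by
    rw [hH, hK, ← mul_assoc, hJJ]; noncomm_ring
  have h2XH : Xᴴ + Xᴴ = H - J * K := by
    rw [hH, hK, ← mul_assoc, hJJ]; noncomm_ring
  have e1 : f X + f X = f H + Matrix.scalar (Fin n) c * f K := by
    rw [← hf.2.1, h2X, hf.2.1, hf.2.2.1, ← hc]
  have e2 : f Xᴴ + f Xᴴ = f H - Matrix.scalar (Fin n) c * f K := by
    rw [← hf.2.1, h2XH, f_sub hf, hf.2.2.1, ← hc]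
  have hsc : (Matrix.scalar (Fin n) c)ᴴ = -Matrix.scalar (Fin n) c := by
    rw [Matrix.scalar_apply, Matrix.diagonal_conjTranspose]
    ext i j
    rcases eq_or_ne i j with rfl | hij
    · simp [hcs]
    · simp [Matrix.diagonal_apply_ne _ hij]
  have hcomm : f K * Matrix.scalar (Fin n) c = Matrix.scalar (Fin n) c * f K :=
    (Matrix.scalar_commute c (fun r => mul_comm c r) (f K)).symm
  have e3 : (f X)ᴴ + (f X)ᴴ = f H - Matrix.scalar (Fin n) c * f K := by
    rw [← Matrix.conjTranspose_add, e1, Matrix.conjTranspose_add, Matrix.conjTranspose_mul,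
      hsc, (f_herm hf hHh).eq, (f_herm hf hKh).eq, mul_neg, hcomm, sub_eq_add_neg]
  have e4 : f Xᴴ + f Xᴴ = (f X)ᴴ + (f X)ᴴ := by rw [e2, e3]
  have h5 : (2 : ℂ) • f Xᴴ = (2 : ℂ) • (f X)ᴴ := by
    rw [two_smul, two_smul]; exact e4
  exact smul_right_injective (Mat n) (two_ne_zero) h5

lemma reassoc {E CW S CN : Mat n} (h : E * CW = S * CN) (Z : Mat n) :
    E * (CW * Z) = S * (CN * Z) := by
  rw [← mul_assoc, h, mul_assoc]

/-- The key Woodbury-style identity. -/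
lemma key {S M W C : Mat n} (hS : IsUnit S) (hM : IsUnit M) (hW : IsUnit W)
    (hWM : W - M = Cᴴ * S⁻¹ * C) (hSW : IsUnit (S - C * W⁻¹ * Cᴴ)) :
    (S - C * W⁻¹ * Cᴴ)⁻¹ * (C * W⁻¹) = S⁻¹ * (C * M⁻¹) := by
  have hSd := (Matrix.isUnit_iff_isUnit_det _).mp hS
  have hMd := (Matrix.isUnit_iff_isUnit_det _).mp hM
  have hWd := (Matrix.isUnit_iff_isUnit_det _).mp hW
  have hSWd := (Matrix.isUnit_iff_isUnit_det _).mp hSW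
  have hmain : (S - C * W⁻¹ * Cᴴ) * (S⁻¹ * (C * M⁻¹)) = C * W⁻¹ := by
    calc (S - C * W⁻¹ * Cᴴ) * (S⁻¹ * (C * M⁻¹))
        = (S * S⁻¹) * (C * M⁻¹) - C * W⁻¹ * (Cᴴ * S⁻¹ * C) * M⁻¹ := by noncomm_ring
      _ = C * M⁻¹ - (C * (W⁻¹ * W) * M⁻¹ - C * W⁻¹ * (M * M⁻¹)) := by
          rw [Matrix.mul_nonsing_inv _ hSd, ← hWM]; noncomm_ring
      _ = C * W⁻¹ := by
          rw [Matrix.nonsing_inv_mul _ hWd, Matrix.mul_nonsing_inv _ hMd]; noncomm_ring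
  calc (S - C * W⁻¹ * Cᴴ)⁻¹ * (C * W⁻¹)
      = (S - C * W⁻¹ * Cᴴ)⁻¹ * ((S - C * W⁻¹ * Cᴴ) * (S⁻¹ * (C * M⁻¹))) := by rw [hmain]
    _ = S⁻¹ * (C * M⁻¹) := by rw [← mul_assoc, Matrix.nonsing_inv_mul _ hSWd, one_mul]

lemma altS_1 (f : Mat n → Mat n) (A Q : Mat n) (k : ℕ) :
    (altS f A Q k).1 = f A * (f Q - (altH f A Q k).2.1)⁻¹ * (altH f A Q k).1 := rfl

lemma altS_B (f : Mat n → Mat n) (A Q : Mat n) (k : ℕ) :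
    (altS f A Q k).2.1 = f A * (f Q - (altH f A Q k).2.1)⁻¹ * (f A)ᴴ := rfl

lemma altH_A (f : Mat n → Mat n) (A Q : Mat n) (k : ℕ) :
    (altH f A Q (k + 1)).1 = A * (Q - (altS f A Q k).2.1)⁻¹ * (altS f A Q k).1 := rfl

lemma altH_B (f : Mat n → Mat n) (A Q : Mat n) (k : ℕ) :
    (altH f A Q (k + 1)).2.1 = A * (Q - (altS f A Q k).2.1)⁻¹ * Aᴴ := rfl

/-- The purely algebraic part. -/
lemma algebra_part (hf : Admissible f) (T Th : ℕ → Mat n)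
    (stepA : ∀ k, T k = f (Th 0) * Th k) (stepB : ∀ k, Th (k + 1) = Th 0 * T k) :
    (∀ i j : ℕ, T (i + j) = f (Th i) * Th j) ∧
    (∀ i j : ℕ, Th (i + j + 1) = Th i * T j) ∧
    (∀ i j k : ℕ, Th (i + j + k + 1) = Th k * f (Th i) * Th j) ∧
    (∀ k : ℕ, Th k = Th 0 * T 0 ^ k) := by
  have hThk : ∀ k, Th k = (Th 0 * f (Th 0)) ^ k * Th 0 := by
    intro k
    induction k with
    | zero => simp
    | succ m ih => rw [stepB m, stepA m, ih, pow_succ']; simp [mul_assoc]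
  have hfThk : ∀ k, f (Th k) = (f (Th 0) * Th 0) ^ k * f (Th 0) := by
    intro k
    rw [hThk k, hf.2.2.1, f_pow hf, hf.2.2.1, hf.1]
  have hTk : ∀ k, T k = f (Th 0) * ((Th 0 * f (Th 0)) ^ k * Th 0) := by
    intro k; rw [stepA k, hThk k]
  have hsemi : ∀ m : ℕ, f (Th 0) * (Th 0 * f (Th 0)) ^ m = (f (Th 0) * Th 0) ^ m * f (Th 0) :=
    fun m => SemiconjBy.pow_right (by rw [SemiconjBy, mul_assoc]) m
  have hsemi2 : ∀ m : ℕ, Th 0 * (f (Th 0) * Th 0) ^ m = (Th 0 * f (Th 0)) ^ m * Th 0 :=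
    fun m => SemiconjBy.pow_right (by rw [SemiconjBy, mul_assoc]) m
  refine ⟨?_, ?_, ?_, ?_⟩
  · intro i j
    rw [hTk (i + j), hfThk i, hThk j, ← hsemi i, pow_add]
    simp [mul_assoc]
  · intro i j
    rw [hThk (i + j + 1), hThk i, hTk j,
      show i + j + 1 = i + (1 + j) from by omega, pow_add, pow_add, pow_one]
    simp [mul_assoc]
  · intro i j k
    rw [hThk (i + j + k + 1), hThk k, hfThk i, hThk j, ← hsemi i,
      show i + j + k + 1 = k + (1 + (i + j)) from by omega, pow_add, pow_add, pow_add, pow_one]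
    simp [mul_assoc]
  · intro k
    rw [hThk k, hTk 0, pow_zero, one_mul]
    exact (hsemi2 k).symm

end Stmt19Aux

open Stmt19Aux in
/-- the relations between `T_k` and the half-index `T_h^{(k)}` for the
alternating iteration: `T_{i+j-1} = f(T_h^{(i)}) T_h^{(j)}`, `T_h^{(i+j)} = T_h^{(i)} T_j`,
`T_h^{(i+j+k-1)} = T_h^{(k)} f(T_h^{(i)}) T_h^{(j)}` and `T_h^{(k)} = T_h^{(1)} T_1^{k-1}`
(all indices here are the paper's shifted by one). -/
theorem stmt_19 {n : ℕ} (f : Mat n → Mat n) (hf : Admissible f)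
    (A Q : Mat n) (hQ : Q.PosDef)
    (hinv1 : ∀ k, IsUnit (f Q - (altH f A Q k).2.1))
    (hinv2 : ∀ k, IsUnit (Q - (altS f A Q k).2.1))
    (XM : Mat n) (hXM : XM.PosDef) (hsol : XM + Aᴴ * (f XM)⁻¹ * A = Q)
    (hinv3 : ∀ k, IsUnit (XM - (altS f A Q k).2.1))
    (hinv4 : ∀ k, IsUnit (f XM - (altH f A Q k).2.1))
    (T Th : ℕ → Mat n)
    (hT : ∀ k, T k = (XM - (altS f A Q k).2.1)⁻¹ * (altS f A Q k).1)
    (hTh : ∀ k, Th k = (f XM - (altH f A Q k).2.1)⁻¹ * (altH f A Q k).1) :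
    (∀ i j : ℕ, T (i + j) = f (Th i) * Th j) ∧
    (∀ i j : ℕ, Th (i + j + 1) = Th i * T j) ∧
    (∀ i j k : ℕ, Th (i + j + k + 1) = Th k * f (Th i) * Th j) ∧
    (∀ k : ℕ, Th k = Th 0 * T 0 ^ k) := by
  have hB0 : (altH f A Q 0).2.1 = (0 : Mat n) := rfl
  have hA0 : (altH f A Q 0).1 = A := rfl
  have hfXM : IsUnit (f XM) := by
    have h := hinv4 0
    rwa [hB0, sub_zero] at h
  have hXMu : IsUnit XM := by
    have h := f_isUnit hf hfXM
    rwa [hf.1] at h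
  have hQXM : Q - XM = Aᴴ * (f XM)⁻¹ * A := by
    rw [← hsol, add_sub_cancel_left]
  have hfQXM : f Q - f XM = (f A)ᴴ * XM⁻¹ * f A := by
    rw [← f_sub hf, hQXM, hf.2.2.1, hf.2.2.1, f_conjT hf, f_inv hf hfXM, hf.1]
  have hTh0 : f (Th 0) = XM⁻¹ * f A := by
    rw [hTh 0, hB0, hA0, sub_zero, hf.2.2.1, f_inv hf hfXM, hf.1]
  have hTh0' : Th 0 = (f XM)⁻¹ * A := by
    rw [hTh 0, hB0, hA0, sub_zero]
  have stepA : ∀ k, T k = f (Th 0) * Th k := by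
    intro k
    have hWM : (f Q - (altH f A Q k).2.1) - (f XM - (altH f A Q k).2.1)
        = (f A)ᴴ * XM⁻¹ * f A := by
      rw [sub_sub_sub_cancel_right, hfQXM]
    have hSW : IsUnit (XM - f A * (f Q - (altH f A Q k).2.1)⁻¹ * (f A)ᴴ) := by
      have h := hinv3 k
      rwa [altS_B] at h
    have hkey := key hXMu (hinv4 k) (hinv1 k) hWM hSW
    rw [hT k, hTh k, hTh0, altS_1, altS_B, reassoc hkey]
    simp [mul_assoc]
  have stepB : ∀ k, Th (k + 1) = Th 0 * T k := by
    intro k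
    have hWM : (Q - (altS f A Q k).2.1) - (XM - (altS f A Q k).2.1)
        = Aᴴ * (f XM)⁻¹ * A := by
      rw [sub_sub_sub_cancel_right, hQXM]
    have hSW : IsUnit (f XM - A * (Q - (altS f A Q k).2.1)⁻¹ * Aᴴ) := by
      have h := hinv4 (k + 1)
      rwa [altH_B] at h
    have hkey := key hfXM (hinv3 k) (hinv2 k) hWM hSW
    rw [hTh (k + 1), hT k, hTh0', altH_A, altH_B, reassoc hkey]
    simp [mul_assoc]
  exact algebra_part hf T Th stepA stepB
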